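/- Let (Ω, ℱ, P) be a probability space, let M ≥ 1 and R ≥ 1, let β : Fin R → Ω → Fin M be measurable band indices for the R repetitions of a packet, let γ : Fin R → Fin B → Fin M → Ω → ℝ be measurable SINR variables, let τ > 0, and let X : Fin B → Fin M → ℝ be a binary assignment matrix with X_{b,m} ∈ {0,1}. Suppose there exists a repetition index r₀ such that P(β_{r₀} = m) = 1/M for every m and, for every m, the event {β_{r₀} = m} is independent of the event ⋃_b {ω : X_{b,m} · γ_{r₀,b,m}(ω) ≥ τ}. Then the packet decoding probability P({ω : ∃ r, ∃ b, X_{b,β_r(ω)} · γ_{r,b,β_r(ω)}(ω) ≥ τ}) is bounded below by (1/M) · Σ_{m=1}^M [ Σ_b X_{b,m} · P(γ_{r₀,b,m} ≥ τ) − Σ_{b<k} X_{b,m} · X_{k,m} · P({γ_{r₀,b,m} ≥ τ} ∩ {γ_{r₀,k,m} ≥ τ}) ]. That is, the quadratic objective of the relaxed assignment problem is a lower bound on the packet decoding probability. -/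
import Mathlib


open MeasureTheory Finset

lemma bonferroni {Ω : Type*} [MeasurableSpace Ω] (P : Measure Ω) [IsFiniteMeasure P]
    {n : ℕ} (A : Fin n → Set Ω) (hA : ∀ i, MeasurableSet (A i)) :
    ∑ i, (P (A i)).toReal
      - ∑ i, ∑ j ∈ Finset.Ioi i, (P (A i ∩ A j)).toReal
    ≤ (P (⋃ i, A i)).toReal := by
  induction n with
  | zero => simp
  | succ n ih =>
    set A' : Fin n → Set Ω := fun i => A i.castSucc with hA'
    set a : Set Ω := A (Fin.last n) with ha
    have hU : (⋃ i, A i) = (⋃ i, A' i) ∪ a := by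
      ext ω
      simp only [Set.mem_iUnion, Set.mem_union, hA', ha]
      constructor
      · rintro ⟨i, hi⟩
        rcases Fin.eq_castSucc_or_eq_last i with ⟨j, rfl⟩ | rfl
        · exact Or.inl ⟨j, hi⟩
        · exact Or.inr hi
      · rintro (⟨j, hj⟩ | h)
        · exact ⟨j.castSucc, hj⟩
        · exact ⟨Fin.last n, h⟩
    have hUm : MeasurableSet (⋃ i, A' i) := MeasurableSet.iUnion fun i => hA _
    have key : (P ((⋃ i, A' i) ∪ a)).toReal + (P ((⋃ i, A' i) ∩ a)).toReal
        = (P (⋃ i, A' i)).toReal + (P a).toReal := by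
      rw [← ENNReal.toReal_add (measure_ne_top _ _) (measure_ne_top _ _),
        ← ENNReal.toReal_add (measure_ne_top _ _) (measure_ne_top _ _),
        measure_union_add_inter _ (hA _)]
    have hinter : (P ((⋃ i, A' i) ∩ a)).toReal ≤ ∑ i, (P (A' i ∩ a)).toReal := by
      rw [← ENNReal.toReal_sum (fun i _ => measure_ne_top _ _)]
      refine ENNReal.toReal_mono (by
        exact ENNReal.sum_ne_top.mpr fun i _ => measure_ne_top _ _) ?_
      rw [Set.iUnion_inter]
      exact measure_iUnion_fintype_le _ _
    have hsum1 : ∑ i, (P (A i)).toReal = ∑ i, (P (A' i)).toReal + (P a).toReal := by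
      rw [Fin.sum_univ_castSucc]
    have hsum2 : ∑ i, ∑ j ∈ Finset.Ioi i, (P (A i ∩ A j)).toReal
        = (∑ i, ∑ j ∈ Finset.Ioi i, (P (A' i ∩ A' j)).toReal)
          + ∑ i, (P (A' i ∩ a)).toReal := by
      have conv : ∀ m (B : Fin m → Set Ω),
          ∑ i, ∑ j ∈ Finset.Ioi i, (P (B i ∩ B j)).toReal
            = ∑ i, ∑ j, if i < j then (P (B i ∩ B j)).toReal else 0 := by
        intro m B
        refine Finset.sum_congr rfl fun i _ => ?_
        rw [← Finset.sum_filter]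
        congr 1
        ext j
        simp [Finset.mem_Ioi, Finset.mem_filter]
      rw [conv _ A, conv _ A']
      rw [Fin.sum_univ_castSucc]
      simp only [Fin.sum_univ_castSucc (n := n)]
      simp [Fin.castSucc_lt_castSucc_iff, Fin.castSucc_lt_last, hA', ha,
        Fin.last_le_iff, Finset.sum_add_distrib]
      exact Finset.sum_eq_zero fun i _ => if_neg (Fin.castSucc_lt_last i).asymm
    have := ih A' (fun i => hA _)
    rw [hU]
    linarith

/-- The quadratic objective of the relaxed assignment problem is a lower bound on the packet
decoding probability: if some repetition `r₀` of the packet has a uniformly distributed band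
`β r₀` which is, for each band `m`, independent of the decoding event
`⋃ b, {X b m * γ r₀ b m ≥ τ}`, then
`P(∃ r b, X b (β r) * γ r b (β r) ≥ τ) ≥
  (1/M) * ∑ m, (∑ b, X b m * P(γ r₀ b m ≥ τ)
    − ∑_{b<k} X b m * X k m * P({γ r₀ b m ≥ τ} ∩ {γ r₀ k m ≥ τ}))`. -/
theorem packet_decoding_probability_lower_bound
    {Ω : Type*} [MeasurableSpace Ω] (P : Measure Ω) [IsProbabilityMeasure P]
    {B M R : ℕ} (hM : 1 ≤ M) (hR : 1 ≤ R)
    (β : Fin R → Ω → Fin M) (hβmeas : ∀ r, Measurable (β r))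
    (γ : Fin R → Fin B → Fin M → Ω → ℝ) (hγ : ∀ r b m, Measurable (γ r b m))
    (τ : ℝ) (hτ : 0 < τ)
    (X : Fin B → Fin M → ℝ) (hX : ∀ b m, X b m = 0 ∨ X b m = 1)
    (r₀ : Fin R)
    (hβunif : ∀ m : Fin M, (P {ω | β r₀ ω = m}).toReal = 1 / M)
    (hindep : ∀ m : Fin M,
      P ({ω | β r₀ ω = m} ∩ ⋃ b, {ω | X b m * γ r₀ b m ω ≥ τ})
        = P {ω | β r₀ ω = m} * P (⋃ b, {ω | X b m * γ r₀ b m ω ≥ τ})) :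
    (1 / M) * ∑ m,
        ((∑ b, X b m * (P {ω | γ r₀ b m ω ≥ τ}).toReal)
          - ∑ b, ∑ k ∈ Finset.Ioi b,
              X b m * X k m
                * (P ({ω | γ r₀ b m ω ≥ τ} ∩ {ω | γ r₀ k m ω ≥ τ})).toReal)
      ≤ (P {ω | ∃ r, ∃ b, X b (β r ω) * γ r b (β r ω) ω ≥ τ}).toReal := by

  classical
  set A : Fin M → Fin B → Set Ω := fun m b => {ω | X b m * γ r₀ b m ω ≥ τ} with hAdef
  have hAmeas : ∀ m b, MeasurableSet (A m b) := fun m b =>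
    measurableSet_le measurable_const ((hγ r₀ b m).const_mul (X b m))
  set U : Fin M → Set Ω := fun m => ⋃ b, A m b with hUdef
  have hUmeas : ∀ m, MeasurableSet (U m) := fun m => MeasurableSet.iUnion fun b => hAmeas m b
  set E : Fin M → Set Ω := fun m => {ω | β r₀ ω = m} ∩ U m with hEdef
  have hβm : ∀ m : Fin M, MeasurableSet {ω | β r₀ ω = m} := fun m =>
    hβmeas r₀ (measurableSet_singleton m)
  have hEmeas : ∀ m, MeasurableSet (E m) := fun m => (hβm m).inter (hUmeas m)
  have hEdisj : Pairwise (Function.onFun Disjoint E) := by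
    intro m m' hmm'
    refine Set.disjoint_left.mpr fun ω hω hω' => hmm' ?_
    have h1 : β r₀ ω = m := hω.1
    have h2 : β r₀ ω = m' := hω'.1
    rw [← h1, h2]
  -- per-band probability identities
  have eq1 : ∀ m b, X b m * (P {ω | γ r₀ b m ω ≥ τ}).toReal = (P (A m b)).toReal := by
    intro m b
    rcases hX b m with h | h
    · have : A m b = ∅ := by
        ext ω; simp [hAdef, h, hτ.not_ge]
      rw [this, h]; simp
    · have : A m b = {ω | γ r₀ b m ω ≥ τ} := by
        ext ω; simp [hAdef, h]
      rw [this, h, one_mul]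
  have eq2 : ∀ m b k, X b m * X k m
      * (P ({ω | γ r₀ b m ω ≥ τ} ∩ {ω | γ r₀ k m ω ≥ τ})).toReal
      = (P (A m b ∩ A m k)).toReal := by
    intro m b k
    rcases hX b m with h | h
    · have : A m b = ∅ := by
        ext ω; simp [hAdef, h, hτ.not_ge]
      rw [this, h]; simp
    · rcases hX k m with h' | h'
      · have : A m k = ∅ := by
          ext ω; simp [hAdef, h', hτ.not_ge]
        rw [this, h']; simp
      · have hb : A m b = {ω | γ r₀ b m ω ≥ τ} := by
          ext ω; simp [hAdef, h]
        have hk : A m k = {ω | γ r₀ k m ω ≥ τ} := by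
          ext ω; simp [hAdef, h']
        rw [hb, hk, h, h', one_mul, one_mul]
  -- step 1: rewrite objective and bound via Bonferroni
  have step1 : (1 / M : ℝ) * ∑ m,
        ((∑ b, X b m * (P {ω | γ r₀ b m ω ≥ τ}).toReal)
          - ∑ b, ∑ k ∈ Finset.Ioi b,
              X b m * X k m
                * (P ({ω | γ r₀ b m ω ≥ τ} ∩ {ω | γ r₀ k m ω ≥ τ})).toReal)
      ≤ (1 / M : ℝ) * ∑ m, (P (U m)).toReal := by
    refine mul_le_mul_of_nonneg_left (Finset.sum_le_sum fun m _ => ?_) (by positivity)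
    calc (∑ b, X b m * (P {ω | γ r₀ b m ω ≥ τ}).toReal)
          - ∑ b, ∑ k ∈ Finset.Ioi b,
              X b m * X k m
                * (P ({ω | γ r₀ b m ω ≥ τ} ∩ {ω | γ r₀ k m ω ≥ τ})).toReal
        = (∑ b, (P (A m b)).toReal)
          - ∑ b, ∑ k ∈ Finset.Ioi b, (P (A m b ∩ A m k)).toReal := by
          rw [Finset.sum_congr rfl fun b _ => eq1 m b]
          congr 1
          exact Finset.sum_congr rfl fun b _ =>
            Finset.sum_congr rfl fun k _ => eq2 m b k
      _ ≤ (P (U m)).toReal := bonferroni P (A m) (hAmeas m)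
  -- step 2: (1/M) * P(U m) = P(E m)
  have step2 : ∀ m : Fin M, (1 / M : ℝ) * (P (U m)).toReal = (P (E m)).toReal := by
    intro m
    rw [hEdef]
    simp only
    rw [hindep m, ENNReal.toReal_mul, hβunif m]
  -- step 3: sum of P(E m) equals P of union
  have step3 : ∑ m, (P (E m)).toReal = (P (⋃ m, E m)).toReal := by
    rw [measure_iUnion hEdisj hEmeas, tsum_fintype,
      ENNReal.toReal_sum (fun m _ => measure_ne_top _ _)]
  -- step 4: union of E m is contained in the decoding event
  have step4 : (⋃ m, E m) ⊆ {ω | ∃ r, ∃ b, X b (β r ω) * γ r b (β r ω) ω ≥ τ} := by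
    intro ω hω
    obtain ⟨m, hm⟩ := Set.mem_iUnion.mp hω
    obtain ⟨hβ, hUω⟩ := hm
    obtain ⟨b, hb⟩ := Set.mem_iUnion.mp hUω
    refine ⟨r₀, b, ?_⟩
    have : β r₀ ω = m := hβ
    rw [this]
    exact hb
  calc (1 / M : ℝ) * ∑ m,
        ((∑ b, X b m * (P {ω | γ r₀ b m ω ≥ τ}).toReal)
          - ∑ b, ∑ k ∈ Finset.Ioi b,
              X b m * X k m
                * (P ({ω | γ r₀ b m ω ≥ τ} ∩ {ω | γ r₀ k m ω ≥ τ})).toReal)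
      ≤ (1 / M : ℝ) * ∑ m, (P (U m)).toReal := step1
    _ = ∑ m, (1 / M : ℝ) * (P (U m)).toReal := Finset.mul_sum _ _ _
    _ = ∑ m, (P (E m)).toReal := Finset.sum_congr rfl fun m _ => step2 m
    _ = (P (⋃ m, E m)).toReal := step3
    _ ≤ (P {ω | ∃ r, ∃ b, X b (β r ω) * γ r b (β r ω) ω ≥ τ}).toReal :=
        ENNReal.toReal_mono (measure_ne_top _ _) (measure_mono step4)
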